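/- Let Ω ⊂ ℝ² be the interior of the trapezoid with vertices (2,0), (3,1), (−2,1) and (−1,0). Let f be the geodesic line of (Ω, h_Ω) whose image is Ω ∩ {y = x}, with f(0) = (1/2, 1/2) and lim_{t→+∞} f(t) = (0, 0), and let g be the geodesic line whose image is Ω ∩ {y = −x + 1}, with g(0) = (1/2, 1/2) and lim_{t→+∞} g(t) = (1, 0). Then for every T ∈ ℝ, the function t ↦ h_Ω(f(t), g(t)) is not convex on [T, +∞). -/

import Mathlib

open Real Filter Set Metric

/- The Hilbert distance on a (bounded open convex) domain `Ω` in Euclidean space: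
for `p ≠ q` it is `log ((‖p' - q‖ * ‖q' - p‖) / (‖p' - p‖ * ‖q' - q‖))` where `p', q'`
are the two boundary points of the chord through `p` and `q`, labelled so that `p` lies
strictly between `p'` and `q`, and `q` lies strictly between `p` and `q'`. -/

open Classical in
noncomputable def hilbertDist {n : ℕ} (Ω : Set (EuclideanSpace ℝ (Fin n)))
    (p q : EuclideanSpace ℝ (Fin n)) : ℝ :=
  if _h : p = q then 0
  else Classical.epsilon fun d : ℝ =>
    ∃ p' q' : EuclideanSpace ℝ (Fin n), p' ∈ frontier Ω ∧ q' ∈ frontier Ω ∧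
      p ∈ openSegment ℝ p' q ∧ q ∈ openSegment ℝ p q' ∧
      d = Real.log ((‖p' - q‖ * ‖q' - p‖) / (‖p' - p‖ * ‖q' - q‖))

/-- A geodesic line of `(Ω, hilbertDist Ω)`: a map `f : ℝ → Ω` whose image lies on a
Euclidean line and which satisfies `hilbertDist Ω (f s) (f t) = |s - t|`. -/
def IsGeodesicLine {n : ℕ} (Ω : Set (EuclideanSpace ℝ (Fin n)))
    (f : ℝ → EuclideanSpace ℝ (Fin n)) : Prop :=
  (∀ t, f t ∈ Ω) ∧ Collinear ℝ (Set.range f) ∧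
    ∀ s t : ℝ, hilbertDist Ω (f s) (f t) = |s - t|

/-- The point `(a, b)` of the Euclidean plane. -/
noncomputable def pt (a b : ℝ) : EuclideanSpace ℝ (Fin 2) :=
  (EuclideanSpace.equiv (Fin 2) ℝ).symm ![a, b]

set_option linter.unusedTactic false
set_option linter.unnecessarySeqFocus false

abbrev E2 := EuclideanSpace ℝ (Fin 2)

def Sset : Set E2 := {z | 0 ≤ z 1 ∧ z 1 ≤ 1 ∧ z 0 ≤ 2 + z 1 ∧ -1 - z 1 ≤ z 0}
def Tset : Set E2 := {z | 0 < z 1 ∧ z 1 < 1 ∧ z 0 < 2 + z 1 ∧ -1 - z 1 < z 0}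

lemma smuladd_apply (a b : ℝ) (x y : E2) (i : Fin 2) : (a • x + b • y) i = a * x i + b * y i := rfl

lemma Sset_convex : Convex ℝ Sset := by
  intro x hx y hy a b ha hb hab
  obtain ⟨h1, h2, h3, h4⟩ := hx
  obtain ⟨k1, k2, k3, k4⟩ := hy
  refine ⟨?_, ?_, ?_, ?_⟩ <;> simp only [smuladd_apply] <;> nlinarith

lemma Sset_closed : IsClosed Sset := by
  have hc : ∀ i : Fin 2, Continuous fun z : E2 => z i := fun i =>
    (EuclideanSpace.proj i).continuous
  have : Sset = {z : E2 | 0 ≤ z 1} ∩ ({z | z 1 ≤ 1} ∩ ({z | z 0 ≤ 2 + z 1} ∩ {z | -1 - z 1 ≤ z 0})) := rfl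
  rw [this]
  exact (isClosed_le continuous_const (hc 1)).inter
    ((isClosed_le (hc 1) continuous_const).inter
      (((isClosed_le (hc 0) (continuous_const.add (hc 1)))).inter
        (isClosed_le (continuous_const.sub (hc 1)) (hc 0))))

lemma Tset_open : IsOpen Tset := by
  have hc : ∀ i : Fin 2, Continuous fun z : E2 => z i := fun i =>
    (EuclideanSpace.proj i).continuous
  have : Tset = {z : E2 | 0 < z 1} ∩ ({z | z 1 < 1} ∩ ({z | z 0 < 2 + z 1} ∩ {z | -1 - z 1 < z 0})) := rfl
  rw [this]
  exact (isOpen_lt continuous_const (hc 1)).inter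
    ((isOpen_lt (hc 1) continuous_const).inter
      (((isOpen_lt (hc 0) (continuous_const.add (hc 1)))).inter
        (isOpen_lt (continuous_const.sub (hc 1)) (hc 0))))

lemma pt_smul (r a b : ℝ) : r • pt a b = pt (r*a) (r*b) := by
  ext i; fin_cases i <;> rfl
lemma pt_add (a b c d : ℝ) : pt a b + pt c d = pt (a+c) (b+d) := by
  ext i; fin_cases i <;> rfl
lemma pt_sub (a b c d : ℝ) : pt a b - pt c d = pt (a-c) (b-d) := by
  ext i; fin_cases i <;> rfl
lemma pt_eta (x : E2) : x = pt (x 0) (x 1) := by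
  ext i; fin_cases i <;> rfl
lemma pt_0 (a b : ℝ) : pt a b 0 = a := rfl
lemma pt_1 (a b : ℝ) : pt a b 1 = b := rfl
lemma pt_congr {a b c d : ℝ} (h1 : a = c) (h2 : b = d) : pt a b = pt c d := by rw [h1, h2]

lemma hull_eq :
    convexHull ℝ ({pt 2 0, pt 3 1, pt (-2) 1, pt (-1) 0} : Set E2) = Sset := by
  apply le_antisymm
  · apply convexHull_min _ Sset_convex
    rintro z (rfl | rfl | rfl | rfl) <;>
      refine ⟨by norm_num [pt], by norm_num [pt], by norm_num [pt], by norm_num [pt]⟩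
  · intro z hz
    obtain ⟨h1, h2, h3, h4⟩ := hz
    set y := z 1 with hy
    set x := z 0 with hx
    have hK : Convex ℝ (convexHull ℝ ({pt 2 0, pt 3 1, pt (-2) 1, pt (-1) 0} : Set E2)) :=
      convex_convexHull _ _
    have hA : pt (-1-y) y ∈ convexHull ℝ ({pt 2 0, pt 3 1, pt (-2) 1, pt (-1) 0} : Set E2) := by
      have := hK (subset_convexHull ℝ _ (by simp : pt (-1) 0 ∈ _))
        (subset_convexHull ℝ _ (by simp : pt (-2) 1 ∈ _))
        (by linarith : (0:ℝ) ≤ 1 - y) (by linarith : (0:ℝ) ≤ y) (by ring)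
      convert this using 1
      rw [pt_smul, pt_smul, pt_add]; congr 1 <;> ring
    have hB : pt (2+y) y ∈ convexHull ℝ ({pt 2 0, pt 3 1, pt (-2) 1, pt (-1) 0} : Set E2) := by
      have := hK (subset_convexHull ℝ _ (by simp : pt 2 0 ∈ _))
        (subset_convexHull ℝ _ (by simp : pt 3 1 ∈ _))
        (by linarith : (0:ℝ) ≤ 1 - y) (by linarith : (0:ℝ) ≤ y) (by ring)
      convert this using 1
      rw [pt_smul, pt_smul, pt_add]; congr 1 <;> ring
    have hden : (0:ℝ) < 3 + 2*y := by linarith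
    have hμ0 : (0:ℝ) ≤ (2 + y - x) / (3 + 2*y) := by
      apply div_nonneg <;> linarith
    have hμ1 : (0:ℝ) ≤ (x - (-1 - y)) / (3 + 2*y) := by
      apply div_nonneg <;> linarith
    have hsum : (2 + y - x) / (3 + 2*y) + (x - (-1 - y)) / (3 + 2*y) = 1 := by
      field_simp; ring
    have := hK hA hB hμ0 hμ1 hsum
    convert this using 1
    rw [pt_smul, pt_smul, pt_add, pt_eta z, ← hx, ← hy]
    refine pt_congr ?_ ?_ <;> field_simp <;> ring

lemma interior_Sset : interior Sset = Tset := by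
  apply le_antisymm
  · intro z hz
    obtain ⟨ε, hε, hball⟩ := Metric.isOpen_iff.1 isOpen_interior z hz
    have hball' : Metric.ball z ε ⊆ Sset := hball.trans interior_subset
    have hmem : ∀ (i : Fin 2) (r : ℝ), |r| < ε → z + r • EuclideanSpace.single i (1:ℝ) ∈ Sset := by
      intro i r hr
      apply hball'
      rw [Metric.mem_ball, dist_eq_norm]
      simp only [add_sub_cancel_left, norm_smul, EuclideanSpace.norm_single]
      simpa using hr
    have happ : ∀ (i j : Fin 2) (r : ℝ),
        (z + r • EuclideanSpace.single i (1:ℝ)) j = z j + r * (if j = i then 1 else 0) := by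
      intro i j r
      have : (z + r • EuclideanSpace.single i (1:ℝ)) j = z j + r * (EuclideanSpace.single i (1:ℝ)) j := rfl
      rw [this, EuclideanSpace.single_apply]
    have hε2 : |(-(ε/2) : ℝ)| < ε := by rw [abs_neg, abs_of_pos (by linarith)]; linarith
    have hε2' : |((ε/2) : ℝ)| < ε := by rw [abs_of_pos (by linarith)]; linarith
    have m1 := hmem 1 (-(ε/2)) hε2
    have m2 := hmem 1 (ε/2) hε2'
    have m3 := hmem 0 (ε/2) hε2'
    have m4 := hmem 0 (-(ε/2)) hε2
    simp only [Sset, Set.mem_setOf_eq, happ] at m1 m2 m3 m4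
    norm_num at m1 m2 m3 m4
    obtain ⟨a1, a2, a3, a4⟩ := m1
    obtain ⟨b1, b2, b3, b4⟩ := m2
    obtain ⟨c1, c2, c3, c4⟩ := m3
    obtain ⟨d1, d2, d3, d4⟩ := m4
    exact ⟨by linarith, by linarith, by linarith, by linarith⟩
  · have h1 : Tset ⊆ Sset := fun z hz => ⟨hz.1.le, hz.2.1.le, hz.2.2.1.le, hz.2.2.2.le⟩
    rw [← Tset_open.interior_eq]
    exact interior_mono h1

lemma half_mem_Tset : pt (1/2) (1/2) ∈ Tset := by
  refine ⟨?_, ?_, ?_, ?_⟩ <;> norm_num [pt_0, pt_1]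

lemma closure_Tset : closure Tset = Sset := by
  apply le_antisymm
  · rw [← Sset_closed.closure_eq]
    exact closure_mono fun z hz => ⟨hz.1.le, hz.2.1.le, hz.2.2.1.le, hz.2.2.2.le⟩
  · -- S ⊆ closure (interior S) = closure Tset
    intro z hz
    have hc : pt (1/2) (1/2) ∈ interior Sset := interior_Sset ▸ half_mem_Tset
    rw [← interior_Sset]
    apply mem_closure_iff_seq_limit.2
    refine ⟨fun n => z + ((1:ℝ)/(n+2)) • (pt (1/2) (1/2) - z), fun n => ?_, ?_⟩
    · exact Sset_convex.add_smul_sub_mem_interior hz hc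
        ⟨by positivity, by rw [div_le_one (by positivity)]; linarith [Nat.cast_nonneg (α := ℝ) n]⟩
    · have h0 : Filter.Tendsto (fun n : ℕ => ((1:ℝ)/(n+2))) Filter.atTop (nhds 0) := by
        simp only [one_div]
        exact Filter.Tendsto.comp tendsto_inv_atTop_zero
          (Filter.tendsto_atTop_add_const_right _ 2 tendsto_natCast_atTop_atTop)
      have := ((h0.smul_const (pt (1/2) (1/2) - z)).const_add z)
      simpa using this

lemma mem_frontier_Tset {b : E2} (hS : b ∈ Sset) (hT : b ∉ Tset) : b ∈ frontier Tset := by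
  rw [frontier, closure_Tset, Tset_open.interior_eq]
  exact ⟨hS, hT⟩

lemma frontier_Tset_subset {b : E2} (hb : b ∈ frontier Tset) : b ∈ Sset ∧ b ∉ Tset := by
  rw [frontier, closure_Tset, Tset_open.interior_eq] at hb
  exact hb

lemma unique_bdry {x y b₁ b₂ : E2} (hx : x ∈ Tset)
    (hb₁ : b₁ ∈ frontier Tset) (hb₂ : b₂ ∈ frontier Tset)
    (h1 : y ∈ openSegment ℝ b₁ x) (h2 : y ∈ openSegment ℝ b₂ x) : b₁ = b₂ := by
  obtain ⟨t₁, s₁, ht₁, hs₁, hts₁, hy₁⟩ := h1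
  obtain ⟨t₂, s₂, ht₂, hs₂, hts₂, hy₂⟩ := h2
  have hs₁' : s₁ = 1 - t₁ := by linarith
  have hs₂' : s₂ = 1 - t₂ := by linarith
  subst hs₁' hs₂'
  have e₁ : t₁ • (b₁ - x) = y - x := by rw [← hy₁]; module
  have e₂ : t₂ • (b₂ - x) = y - x := by rw [← hy₂]; module
  have e : t₁ • (b₁ - x) = t₂ • (b₂ - x) := by rw [e₁, e₂]
  have key : ∀ u v : E2, u ∈ frontier Tset → v ∈ frontier Tset →
      ∀ a b : ℝ, 0 < a → 0 < b → b < a → a • (u - x) = b • (v - x) → False := by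
    intro u v hu hv a b ha hb hba he
    have hr : u - x = (b/a) • (v - x) := by
      rw [div_eq_inv_mul, ← smul_smul, ← he, smul_smul, inv_mul_cancel₀ (ne_of_gt ha), one_smul]
    have hu' : u = (1 - b/a) • x + (b/a) • v := by
      have : u = x + (b/a) • (v - x) := by rw [← hr]; abel
      rw [this]; module
    have hint : u ∈ interior Sset := by
      rw [hu']
      refine Sset_convex.combo_interior_closure_mem_interior ?_ ?_ ?_ (by positivity) (by ring)
      · rw [interior_Sset]; exact hx
      · rw [Sset_closed.closure_eq]
        exact (frontier_Tset_subset hv).1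
      · have : b/a < 1 := (div_lt_one ha).2 hba
        linarith
    rw [interior_Sset] at hint
    exact (frontier_Tset_subset hu).2 hint
  rcases lt_trichotomy t₁ t₂ with h | h | h
  · exact absurd (e.symm) (by intro he; exact key b₂ b₁ hb₂ hb₁ t₂ t₁ ht₂ ht₁ h he)
  · subst h
    have := smul_right_injective E2 (ne_of_gt ht₁) e
    have h' : b₁ - x = b₂ - x := this
    have := sub_left_injective.eq_iff.1 h'
    exact this
  · exact absurd e (by intro he; exact key b₁ b₂ hb₁ hb₂ t₁ t₂ ht₁ ht₂ h he)

lemma hilbert_formula {p q p' q' : E2} (hpq : p ≠ q) (hp : p ∈ Tset) (hq : q ∈ Tset)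
    (hp' : p' ∈ frontier Tset) (hq' : q' ∈ frontier Tset)
    (h1 : p ∈ openSegment ℝ p' q) (h2 : q ∈ openSegment ℝ p q') :
    hilbertDist Tset p q = Real.log ((‖p' - q‖ * ‖q' - p‖) / (‖p' - p‖ * ‖q' - q‖)) := by
  rw [hilbertDist, dif_neg hpq]
  have hex : ∃ d : ℝ, ∃ p'' q'' : E2, p'' ∈ frontier Tset ∧ q'' ∈ frontier Tset ∧
      p ∈ openSegment ℝ p'' q ∧ q ∈ openSegment ℝ p q'' ∧
      d = Real.log ((‖p'' - q‖ * ‖q'' - p‖) / (‖p'' - p‖ * ‖q'' - q‖)) :=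
    ⟨_, p', q', hp', hq', h1, h2, rfl⟩
  obtain ⟨p'', q'', hp'', hq'', h1', h2', hd⟩ := Classical.epsilon_spec hex
  rw [openSegment_symm] at h2 h2'
  have ep : p'' = p' := unique_bdry hq hp'' hp' h1' h1
  have eq' : q'' = q' := unique_bdry hp hq'' hq' h2' h2
  rw [hd, ep, eq']

lemma seg_mem {x v : E2} {a b : ℝ} (h0 : 0 < a) (hab : a < b) :
    x + a • v ∈ openSegment ℝ x (x + b • v) := by
  have hb : (0:ℝ) < b := h0.trans hab
  refine ⟨1 - a/b, a/b, ?_, by positivity, by ring, ?_⟩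
  · have : a/b < 1 := (div_lt_one hb).2 hab
    linarith
  · rw [smul_add, smul_smul, div_mul_cancel₀ a (ne_of_gt hb)]
    module

lemma chord_dist {x v : E2} (hv : v ≠ 0) {α a b β : ℝ}
    (h1 : α < a) (h2 : a < b) (h3 : b < β)
    (hα : x + α • v ∈ frontier Tset) (hβ : x + β • v ∈ frontier Tset)
    (ha : x + a • v ∈ Tset) (hb : x + b • v ∈ Tset) :
    hilbertDist Tset (x + a • v) (x + b • v) =
      Real.log (((b - α) * (β - a)) / ((a - α) * (β - b))) := by
  have hvn : ‖v‖ ≠ 0 := norm_ne_zero_iff.2 hv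
  have hpq : x + a • v ≠ x + b • v := by
    intro h
    have : (a - b) • v = 0 := by
      have := sub_eq_zero_of_eq h
      rw [← this]; module
    rcases smul_eq_zero.1 this with h' | h'
    · exact absurd (sub_eq_zero.1 h') (ne_of_lt h2)
    · exact hv h'
  have hseg1 : x + a • v ∈ openSegment ℝ (x + α • v) (x + b • v) := by
    have e1 : x + a • v = (x + α • v) + (a - α) • v := by module
    have e2 : x + b • v = (x + α • v) + (b - α) • v := by module
    rw [e1, e2]
    exact seg_mem (by linarith) (by linarith)
  have hseg2 : x + b • v ∈ openSegment ℝ (x + a • v) (x + β • v) := by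
    have e1 : x + b • v = (x + a • v) + (b - a) • v := by module
    have e2 : x + β • v = (x + a • v) + (β - a) • v := by module
    rw [e1, e2]
    exact seg_mem (by linarith) (by linarith)
  rw [hilbert_formula hpq ha hb hα hβ hseg1 hseg2]
  congr 1
  have n1 : (x + α • v) - (x + b • v) = (α - b) • v := by module
  have n2 : (x + β • v) - (x + a • v) = (β - a) • v := by module
  have n3 : (x + α • v) - (x + a • v) = (α - a) • v := by module
  have n4 : (x + β • v) - (x + b • v) = (β - b) • v := by module
  rw [n1, n2, n3, n4, norm_smul, norm_smul, norm_smul, norm_smul]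
  rw [Real.norm_eq_abs, Real.norm_eq_abs, Real.norm_eq_abs, Real.norm_eq_abs,
    abs_of_neg (by linarith : α - b < 0), abs_of_pos (by linarith : (0:ℝ) < β - a),
    abs_of_neg (by linarith : α - a < 0), abs_of_pos (by linarith : (0:ℝ) < β - b)]
  rw [show -(α - b) * ‖v‖ * ((β - a) * ‖v‖) = ((b - α) * (β - a)) * (‖v‖ * ‖v‖) by ring,
    show -(α - a) * ‖v‖ * ((β - b) * ‖v‖) = ((a - α) * (β - b)) * (‖v‖ * ‖v‖) by ring,
    mul_div_mul_right _ _ (mul_ne_zero hvn hvn)]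

lemma diag_mem_Tset {a : ℝ} (h0 : 0 < a) (h1 : a < 1) : pt a a ∈ Tset := by
  refine ⟨?_, ?_, ?_, ?_⟩ <;> simp only [pt_0, pt_1] <;> linarith

lemma anti_mem_Tset {a : ℝ} (h0 : 0 < a) (h1 : a < 1) : pt (1-a) a ∈ Tset := by
  refine ⟨?_, ?_, ?_, ?_⟩ <;> simp only [pt_0, pt_1] <;> linarith

lemma corner00 : pt 0 0 ∈ frontier Tset := by
  apply mem_frontier_Tset
  · refine ⟨?_, ?_, ?_, ?_⟩ <;> norm_num [pt_0, pt_1]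
  · intro h; have := h.1; rw [pt_1] at this; exact lt_irrefl 0 this

lemma corner11 : pt 1 1 ∈ frontier Tset := by
  apply mem_frontier_Tset
  · refine ⟨?_, ?_, ?_, ?_⟩ <;> norm_num [pt_0, pt_1]
  · intro h; have := h.2.1; rw [pt_1] at this; exact lt_irrefl 1 this

lemma corner10 : pt 1 0 ∈ frontier Tset := by
  apply mem_frontier_Tset
  · refine ⟨?_, ?_, ?_, ?_⟩ <;> norm_num [pt_0, pt_1]
  · intro h; have := h.1; rw [pt_1] at this; exact lt_irrefl 0 this

lemma corner01 : pt 0 1 ∈ frontier Tset := by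
  apply mem_frontier_Tset
  · refine ⟨?_, ?_, ?_, ?_⟩ <;> norm_num [pt_0, pt_1]
  · intro h; have := h.2.1; rw [pt_1] at this; exact lt_irrefl 1 this

lemma left_bdry {s : ℝ} (h0 : 0 ≤ s) (h1 : s ≤ 1) : pt (-1-s) s ∈ frontier Tset := by
  apply mem_frontier_Tset
  · refine ⟨?_, ?_, ?_, ?_⟩ <;> simp only [pt_0, pt_1] <;> linarith
  · intro h; have := h.2.2.2; rw [pt_0, pt_1] at this; linarith

lemma right_bdry {s : ℝ} (h0 : 0 ≤ s) (h1 : s ≤ 1) : pt (2+s) s ∈ frontier Tset := by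
  apply mem_frontier_Tset
  · refine ⟨?_, ?_, ?_, ?_⟩ <;> simp only [pt_0, pt_1] <;> linarith
  · intro h; have := h.2.2.1; rw [pt_0, pt_1] at this; linarith

lemma diag_param (s : ℝ) : pt 0 0 + s • pt 1 1 = pt s s := by
  rw [pt_smul, pt_add]; exact pt_congr (by ring) (by ring)

lemma anti_param (s : ℝ) : pt 1 0 + s • pt (-1) 1 = pt (1-s) s := by
  rw [pt_smul, pt_add]; exact pt_congr (by ring) (by ring)

lemma horiz_param (s c : ℝ) : pt 0 s + c • pt 1 0 = pt c s := by
  rw [pt_smul, pt_add]; exact pt_congr (by ring) (by ring)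

lemma pt11_ne : (pt 1 1 : E2) ≠ 0 := fun h => one_ne_zero (congrArg (fun z : E2 => z 0) h : (1:ℝ) = 0)
lemma ptm11_ne : (pt (-1) 1 : E2) ≠ 0 := fun h => one_ne_zero (congrArg (fun z : E2 => z 1) h : (1:ℝ) = 0)
lemma pt10_ne : (pt 1 0 : E2) ≠ 0 := fun h => one_ne_zero (congrArg (fun z : E2 => z 0) h : (1:ℝ) = 0)

lemma diag_dist {a b : ℝ} (h0 : 0 < a) (hab : a < b) (h1 : b < 1) :
    hilbertDist Tset (pt a a) (pt b b) = Real.log ((b * (1 - a)) / (a * (1 - b))) := by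
  have := chord_dist (x := pt 0 0) (v := pt 1 1) pt11_ne
    (α := 0) (a := a) (b := b) (β := 1) h0 hab h1
    (by rw [diag_param]; exact corner00) (by rw [diag_param]; exact corner11)
    (by rw [diag_param]; exact diag_mem_Tset h0 (hab.trans h1))
    (by rw [diag_param]; exact diag_mem_Tset (h0.trans hab) h1)
  rw [diag_param, diag_param] at this
  rw [this]
  norm_num

lemma anti_dist {a b : ℝ} (h0 : 0 < a) (hab : a < b) (h1 : b < 1) :
    hilbertDist Tset (pt (1-a) a) (pt (1-b) b) = Real.log ((b * (1 - a)) / (a * (1 - b))) := by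
  have := chord_dist (x := pt 1 0) (v := pt (-1) 1) ptm11_ne
    (α := 0) (a := a) (b := b) (β := 1) h0 hab h1
    (by rw [anti_param]; norm_num; exact corner10) (by rw [anti_param]; norm_num; exact corner01)
    (by rw [anti_param]; exact anti_mem_Tset h0 (hab.trans h1))
    (by rw [anti_param]; exact anti_mem_Tset (h0.trans hab) h1)
  rw [anti_param, anti_param] at this
  rw [this]
  norm_num

lemma horiz_dist {s : ℝ} (h0 : 0 < s) (h1 : s < 1/2) :
    hilbertDist Tset (pt s s) (pt (1-s) s) = Real.log (4 / (1 + 2*s)^2) := by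
  have := chord_dist (x := pt 0 s) (v := pt 1 0) pt10_ne
    (α := -1-s) (a := s) (b := 1-s) (β := 2+s)
    (by linarith) (by linarith) (by linarith)
    (by rw [horiz_param]; exact left_bdry (by linarith) (by linarith))
    (by rw [horiz_param]; exact right_bdry (by linarith) (by linarith))
    (by rw [horiz_param]; exact diag_mem_Tset h0 (by linarith))
    (by rw [horiz_param]
        have : pt (1-s) s ∈ Tset := anti_mem_Tset h0 (by linarith)
        exact this)
  rw [horiz_param, horiz_param] at this
  rw [this]
  congr 1
  rw [show (1 - s - (-1 - s)) * (2 + s - s) = 4 by ring,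
    show (s - (-1 - s)) * (2 + s - (1 - s)) = (1 + 2*s)^2 by ring]

lemma param_lemma (σ : ℝ → ℝ) (hσ0 : ∀ t, 0 < σ t) (hσ1 : ∀ t, σ t < 1)
    (hdist : ∀ s t : ℝ, σ s < σ t →
      Real.log ((σ t * (1 - σ s)) / (σ s * (1 - σ t))) = |s - t|)
    (hinj : ∀ s t : ℝ, σ s = σ t → s = t)
    (hhalf : σ 0 = 1/2)
    (hlim : Filter.Tendsto σ Filter.atTop (nhds 0)) :
    ∀ t : ℝ, 0 < t → σ t = (1 + Real.exp t)⁻¹ := by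
  set u : ℝ → ℝ := fun t => Real.log ((1 - σ t) / σ t) with hu_def
  have hlog : ∀ s t : ℝ, σ s < σ t →
      Real.log ((σ t * (1 - σ s)) / (σ s * (1 - σ t))) = u s - u t := by
    intro s t h
    have p1 : (0:ℝ) < (1 - σ s) / σ s := by
      apply div_pos <;> [linarith [hσ1 s]; exact hσ0 s]
    have p2 : (0:ℝ) < (1 - σ t) / σ t := by
      apply div_pos <;> [linarith [hσ1 t]; exact hσ0 t]
    rw [hu_def]
    rw [← Real.log_div (ne_of_gt p1) (ne_of_gt p2)]
    congr 1
    field_simp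
  have husub : ∀ s t : ℝ, σ s < σ t → u s - u t = |s - t| := by
    intro s t h; rw [← hlog s t h]; exact hdist s t h
  have habs : ∀ s t : ℝ, |u s - u t| = |s - t| := by
    intro s t
    rcases lt_trichotomy (σ s) (σ t) with h | h | h
    · rw [← husub s t h, abs_of_nonneg]; rw [husub s t h]; positivity
    · rw [hinj s t h]; simp
    · rw [abs_sub_comm, abs_sub_comm s t, ← husub t s h, abs_of_nonneg]
      rw [husub t s h]; positivity
  have hu0 : u 0 = 0 := by rw [hu_def]; simp [hhalf]; norm_num
  have habs0 : ∀ t : ℝ, |u t| = |t| := by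
    intro t; have := habs t 0; rwa [hu0, sub_zero, sub_zero] at this
  have hut : ∀ t : ℝ, 0 < t → u t = t := by
    by_contra hcon
    push_neg at hcon
    obtain ⟨t₀, ht₀, hne⟩ := hcon
    have hut₀ : u t₀ = -t₀ := by
      rcases abs_eq (le_of_lt ht₀) |>.1 ((habs0 t₀).trans (abs_of_pos ht₀)) with h | h
      · exact absurd h hne
      · exact h
    have hall : ∀ t : ℝ, t₀ < t → u t = -t := by
      intro t ht
      have h1 : |u t - u t₀| = t - t₀ := by
        rw [habs t t₀, abs_of_pos (by linarith)]
      have h2 : |u t| = t := (habs0 t).trans (abs_of_pos (by linarith))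
      rcases abs_eq (by linarith : (0:ℝ) ≤ t) |>.1 h2 with h | h
      · exfalso
        rw [hut₀, h, sub_neg_eq_add] at h1
        rw [abs_of_pos (by linarith)] at h1
        linarith
      · exact h
    have hσt : ∀ t : ℝ, t₀ < t → σ t = (1 + Real.exp (-t))⁻¹ := by
      intro t ht
      have h := hall t ht
      have hpos : (0:ℝ) < (1 - σ t) / σ t := by
        apply div_pos <;> [linarith [hσ1 t]; exact hσ0 t]
      have : (1 - σ t) / σ t = Real.exp (-t) := by
        have h2 : Real.exp (u t) = (1 - σ t) / σ t := Real.exp_log hpos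
        rw [h] at h2; exact h2.symm
      have hσne : σ t ≠ 0 := ne_of_gt (hσ0 t)
      rw [div_eq_iff hσne] at this
      have hexp : (0:ℝ) < 1 + Real.exp (-t) := by positivity
      field_simp
      linarith
    have hlim' : Filter.Tendsto σ Filter.atTop (nhds 1) := by
      have h1 : Filter.Tendsto (fun t : ℝ => (1 + Real.exp (-t))⁻¹) Filter.atTop (nhds 1) := by
        have := (Real.tendsto_exp_neg_atTop_nhds_zero.const_add 1).inv₀ (by norm_num)
        simpa using this
      apply h1.congr'
      filter_upwards [Filter.eventually_gt_atTop t₀] with t ht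
      exact (hσt t ht).symm
    exact absurd (tendsto_nhds_unique hlim hlim') (by norm_num)
  intro t ht
  have h := hut t ht
  have hpos : (0:ℝ) < (1 - σ t) / σ t := by
    apply div_pos <;> [linarith [hσ1 t]; exact hσ0 t]
  have : (1 - σ t) / σ t = Real.exp t := by
    have h2 : Real.exp (u t) = (1 - σ t) / σ t := Real.exp_log hpos
    rw [h] at h2; exact h2.symm
  have hσne : σ t ≠ 0 := ne_of_gt (hσ0 t)
  rw [div_eq_iff hσne] at this
  have hexp : (0:ℝ) < 1 + Real.exp t := by positivity
  field_simp
  linarith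

theorem trapezoid_intersecting_geodesics_not_eventually_convex
    (Ω : Set (EuclideanSpace ℝ (Fin 2)))
    (hΩ : Ω = interior (convexHull ℝ
      ({pt 2 0, pt 3 1, pt (-2) 1, pt (-1) 0} : Set (EuclideanSpace ℝ (Fin 2)))))
    (f g : ℝ → EuclideanSpace ℝ (Fin 2))
    (hf : IsGeodesicLine Ω f) (hg : IsGeodesicLine Ω g)
    (hfim : Set.range f = Ω ∩ {z : EuclideanSpace ℝ (Fin 2) | z 1 = z 0})
    (hf0 : f 0 = pt (1 / 2) (1 / 2))
    (hflim : Filter.Tendsto f Filter.atTop (nhds (pt 0 0)))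
    (hgim : Set.range g = Ω ∩ {z : EuclideanSpace ℝ (Fin 2) | z 1 = -z 0 + 1})
    (hg0 : g 0 = pt (1 / 2) (1 / 2))
    (hglim : Filter.Tendsto g Filter.atTop (nhds (pt 1 0))) :
    ∀ T : ℝ, ¬ ConvexOn ℝ (Set.Ici T) (fun t => hilbertDist Ω (f t) (g t)) := by
  have hΩT : Ω = Tset := by rw [hΩ, hull_eq, interior_Sset]
  subst hΩT
  -- f is the diagonal geodesic
  set σ : ℝ → ℝ := fun t => f t 0 with hσdef
  have hfd : ∀ t : ℝ, f t ∈ Tset ∧ f t = pt (σ t) (σ t) := by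
    intro t
    have hmem : f t ∈ Set.range f := Set.mem_range_self t
    rw [hfim] at hmem
    obtain ⟨hft, he⟩ := hmem
    refine ⟨hft, ?_⟩
    calc f t = pt (f t 0) (f t 1) := pt_eta _
    _ = pt (σ t) (σ t) := by rw [he]
  have hσ0 : ∀ t, 0 < σ t := by
    intro t
    have h := (hfd t).1
    have he : f t 1 = f t 0 := by
      have hmem : f t ∈ Set.range f := Set.mem_range_self t
      rw [hfim] at hmem; exact hmem.2
    have := h.1; rw [he] at this; exact this
  have hσ1 : ∀ t, σ t < 1 := by
    intro t
    have h := (hfd t).1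
    have he : f t 1 = f t 0 := by
      have hmem : f t ∈ Set.range f := Set.mem_range_self t
      rw [hfim] at hmem; exact hmem.2
    have := h.2.1; rw [he] at this; exact this
  have hσform : ∀ t : ℝ, 0 < t → σ t = (1 + Real.exp t)⁻¹ := by
    apply param_lemma σ hσ0 hσ1
    · intro s t h
      have hd := hf.2.2 s t
      rw [(hfd s).2, (hfd t).2, diag_dist (hσ0 s) h (hσ1 t)] at hd
      exact hd
    · intro s t h
      have hfe : f s = f t := by rw [(hfd s).2, (hfd t).2, h]
      have hd := hf.2.2 s t
      rw [hfe, hilbertDist, dif_pos rfl] at hd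
      have := abs_eq_zero.1 hd.symm
      linarith [sub_eq_zero.1 this]
    · show f 0 0 = 1/2
      rw [hf0, pt_0]
    · have hc : Continuous fun z : E2 => z 0 := (EuclideanSpace.proj (0 : Fin 2)).continuous
      have := (hc.tendsto (pt 0 0)).comp hflim
      exact this
  -- g is the anti-diagonal geodesic
  set τ : ℝ → ℝ := fun t => g t 1 with hτdef
  have hgd : ∀ t : ℝ, g t ∈ Tset ∧ g t = pt (1 - τ t) (τ t) := by
    intro t
    have hmem : g t ∈ Set.range g := Set.mem_range_self t
    rw [hgim] at hmem
    obtain ⟨hgt, he⟩ := hmem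
    refine ⟨hgt, ?_⟩
    calc g t = pt (g t 0) (g t 1) := pt_eta _
    _ = pt (1 - τ t) (τ t) := by
        refine pt_congr ?_ rfl
        show g t 0 = 1 - τ t
        have : τ t = -(g t 0) + 1 := he
        linarith [this]
  have hτ0 : ∀ t, 0 < τ t := fun t => (hgd t).1.1
  have hτ1 : ∀ t, τ t < 1 := fun t => (hgd t).1.2.1
  have hτform : ∀ t : ℝ, 0 < t → τ t = (1 + Real.exp t)⁻¹ := by
    apply param_lemma τ hτ0 hτ1
    · intro s t h
      have hd := hg.2.2 s t
      rw [(hgd s).2, (hgd t).2, anti_dist (hτ0 s) h (hτ1 t)] at hd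
      exact hd
    · intro s t h
      have hge : g s = g t := by rw [(hgd s).2, (hgd t).2, h]
      have hd := hg.2.2 s t
      rw [hge, hilbertDist, dif_pos rfl] at hd
      have := abs_eq_zero.1 hd.symm
      linarith [sub_eq_zero.1 this]
    · show g 0 1 = 1/2
      rw [hg0, pt_1]
    · have hc : Continuous fun z : E2 => z 1 := (EuclideanSpace.proj (1 : Fin 2)).continuous
      have := (hc.tendsto (pt 1 0)).comp hglim
      exact this
  -- the distance function formula
  set w : ℝ → ℝ := fun t => (1 + Real.exp t)⁻¹ with hwdef
  have hw0 : ∀ t, 0 < w t := by intro t; positivity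
  have hwhalf : ∀ t : ℝ, 0 < t → w t < 1/2 := by
    intro t ht
    have h1 : (1:ℝ) < Real.exp t := by
      rw [← Real.exp_zero]; exact Real.exp_lt_exp.2 ht
    rw [hwdef]
    rw [show (1:ℝ)/2 = (2:ℝ)⁻¹ by norm_num]
    exact inv_strictAnti₀ (by norm_num) (by simpa using by linarith)
  set D : ℝ → ℝ := fun t => hilbertDist Tset (f t) (g t) with hDdef
  have hD : ∀ t : ℝ, 1 ≤ t → D t = Real.log (4 / (1 + 2 * w t)^2) := by
    intro t ht
    have ht0 : (0:ℝ) < t := by linarith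
    have h1 : f t = pt (w t) (w t) := by rw [(hfd t).2, hσform t ht0]
    have h2 : g t = pt (1 - w t) (w t) := by rw [(hgd t).2, hτform t ht0]
    rw [hDdef]
    show hilbertDist Tset (f t) (g t) = _
    rw [h1, h2]
    exact horiz_dist (hw0 t) (hwhalf t ht0)
  have hwmono : ∀ a b : ℝ, a < b → w b < w a := by
    intro a b hab
    rw [hwdef]
    exact inv_strictAnti₀ (by positivity) (by simpa using Real.exp_lt_exp.2 hab)
  have hDmono : ∀ a b : ℝ, 1 ≤ a → a < b → D a < D b := by
    intro a b ha hab
    rw [hD a ha, hD b (by linarith)]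
    apply Real.log_lt_log (by positivity)
    apply div_lt_div_of_pos_left (by norm_num) (by positivity)
    have h := hwmono a b hab
    nlinarith [hw0 a, hw0 b]
  have hDbd : ∀ t : ℝ, 1 ≤ t → D t < Real.log 4 := by
    intro t ht
    rw [hD t ht]
    apply Real.log_lt_log (by positivity)
    have h := hw0 t
    have h2 : (1:ℝ) < (1 + 2 * w t)^2 := by nlinarith
    calc 4 / (1 + 2*w t)^2 < 4 / 1 := by
          apply div_lt_div_of_pos_left (by norm_num) (by norm_num) h2
    _ = 4 := by norm_num
  -- conclusion
  intro T hconv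
  set a : ℝ := max T 1 with hadef
  have ha1 : (1:ℝ) ≤ a := le_max_right T 1
  have haT : T ≤ a := le_max_left T 1
  set b : ℝ := a + 1 with hbdef
  set c : ℝ := D b - D a with hcdef
  have hc : 0 < c := by
    rw [hcdef]
    have := hDmono a b ha1 (by rw [hbdef]; linarith)
    linarith
  have hDa : D a < Real.log 4 := hDbd a ha1
  set z : ℝ := a + (Real.log 4 - D a)/c + 1 with hzdef
  have hzb : b < z := by
    rw [hzdef, hbdef]
    have : 0 < (Real.log 4 - D a)/c := div_pos (by linarith) hc
    linarith
  have hza : (0:ℝ) < z - a := by rw [hbdef] at hzb; linarith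
  have hz1 : (1:ℝ) ≤ z := by rw [hbdef] at hzb; linarith
  have hDz : D z < Real.log 4 := hDbd z hz1
  have hcomb : ((z-b)/(z-a)) * a + ((b-a)/(z-a)) * z = b := by
    field_simp
    ring
  have key : D (((z-b)/(z-a)) • a + ((b-a)/(z-a)) • z) ≤
      ((z-b)/(z-a)) * D a + ((b-a)/(z-a)) * D z :=
    hconv.2 (Set.mem_Ici.2 haT) (Set.mem_Ici.2 (by linarith : T ≤ z))
      (div_nonneg (by linarith) hza.le) (div_nonneg (by rw [hbdef]; linarith) hza.le)
      (by rw [← add_div, show z - b + (b - a) = z - a by ring]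
          exact div_self (ne_of_gt hza))
  simp only [smul_eq_mul] at key
  rw [hcomb] at key
  have key2 : D b * (z - a) ≤ (z - b) * D a + (b - a) * D z := by
    rw [div_mul_eq_mul_div, div_mul_eq_mul_div, ← add_div, le_div_iff₀ hza] at key
    exact key
  have hcL : c * (z - a) = (Real.log 4 - D a) + c := by
    rw [hzdef]
    field_simp
    ring
  have e1 : D b = D a + c := by rw [hcdef]; ring
  rw [e1, show z - b = (z - a) - 1 by rw [hbdef]; ring,
    show b - a = 1 by rw [hbdef]; ring] at key2
  nlinarith [key2, hcL, hc, hDz]
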